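/- Let F = (AR, att) be an argument graph. For every complete extension E ∈ co(F), the set d(E) is a complete extension of defenses of DG(F), i.e., d(E) ∈ CO(DG(F)). -/

import Mathlib

open Set

/-- An argument graph (argumentation framework): a finite set of arguments
with an attack relation between arguments of the graph. -/
structure AF (A : Type*) where
  AR : Set A
  att : A → A → Prop
  finite : AR.Finite
  att_mem : ∀ a b, att a b → a ∈ AR ∧ b ∈ AR

namespace AF

variable {A : Type*} (F : AF A)

/-- An argument is initial if no argument attacks it. -/
def Initial (a : A) : Prop := ∀ b, ¬ F.att b a

/-- A set of arguments is conflict-free. -/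
def ConflictFree (E : Set A) : Prop :=
  E ⊆ F.AR ∧ ∀ a ∈ E, ∀ b ∈ E, ¬ F.att a b

/-- α is defended by E: every attacker of α is attacked by E. -/
def Defends (E : Set A) (a : A) : Prop :=
  ∀ b, F.att b a → ∃ c ∈ E, F.att c b

def Admissible (E : Set A) : Prop :=
  F.ConflictFree E ∧ ∀ a ∈ E, F.Defends E a

def Complete (E : Set A) : Prop :=
  F.Admissible E ∧ ∀ a ∈ F.AR, F.Defends E a → a ∈ E

/-- The set of complete extensions. -/
def co : Set (Set A) := {E | F.Complete E}

/-- The set of grounded extensions (minimal complete extensions). -/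
def gr : Set (Set A) := {E | F.Complete E ∧ ∀ E', F.Complete E' → E ⊆ E'}

/-- The set of preferred extensions (maximal complete extensions). -/
def pr : Set (Set A) := {E | F.Complete E ∧ ∀ E', F.Complete E' → E ⊆ E' → E = E'}

/-- The set of stable extensions. -/
def st : Set (Set A) :=
  {E | F.ConflictFree E ∧ ∀ a ∈ F.AR, a ∉ E → ∃ b ∈ E, F.att b a}

/-- The set of defenses of `F`.  A defense is either a pair `⟨some α, β⟩` with
`{α, β}` conflict-free and some `γ` with `α→γ` and `γ→β`, or a pair
`⟨none, β⟩` with `β` initial (`none` plays the role of `⌀`). -/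
def nmd : Set (Option A × A) :=
  {p | (∃ α, p.1 = some α ∧ α ∈ F.AR ∧ p.2 ∈ F.AR ∧
          F.ConflictFree {α, p.2} ∧
          ∃ γ, γ ∈ F.AR ∧ F.att α γ ∧ F.att γ p.2)
     ∨ (p.1 = none ∧ p.2 ∈ F.AR ∧ F.Initial p.2)}

/-- The set of defeaters of defenses (DoDs) of `F`. -/
def und : Set (Option A × A) :=
  {p | (∃ α, p.1 = some α ∧ α ∈ F.AR ∧ p.2 ∈ F.AR ∧
          ¬ F.ConflictFree {α, p.2} ∧
          ∃ γ, γ ∈ F.AR ∧ γ ≠ α ∧ γ ≠ p.2 ∧ F.att α γ ∧ F.att γ p.2)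
     ∨ (p.1 = none ∧ p.2 ∈ F.AR ∧
          (F.att p.2 p.2 ∨ ∃ γ, F.att γ γ ∧ F.att γ p.2))}

/-- Nodes of the defense graph: defenses together with their defeaters. -/
def dgn : Set (Option A × A) := F.nmd ∪ F.und

/-- Lifting of the attack relation to `Option`: conditions mentioning `⌀` are false. -/
def oatt (x y : Option A) : Prop := ∃ a b, x = some a ∧ y = some b ∧ F.att a b

/-- The attack relation `→d` of the defense graph:
`[x,α] →d [y,β]` iff `x→y`, `x→β`, `α→y` or `α→β`. -/
def dAtt (p q : Option A × A) : Prop :=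
  F.oatt p.1 q.1 ∨ F.oatt p.1 (some q.2) ∨ F.oatt (some p.2) q.1 ∨ F.att p.2 q.2

/-- Conflict-freeness of a set of defenses. -/
def DConflictFree (D : Set (Option A × A)) : Prop :=
  D ⊆ F.nmd ∧ ∀ X ∈ D, ∀ Y ∈ D, ¬ F.dAtt X Y

/-- A defense X is defended by D in the defense graph. -/
def DDefends (D : Set (Option A × A)) (X : Option A × A) : Prop :=
  ∀ Y ∈ F.dgn, F.dAtt Y X → ∃ Z ∈ D, F.dAtt Z Y

def DAdmissible (D : Set (Option A × A)) : Prop :=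
  F.DConflictFree D ∧ ∀ X ∈ D, F.DDefends D X

def DComplete (D : Set (Option A × A)) : Prop :=
  F.DAdmissible D ∧ ∀ X ∈ F.nmd, F.DDefends D X → X ∈ D

/-- Complete extensions of defenses of the defense graph DG(F). -/
def CO : Set (Set (Option A × A)) := {D | F.DComplete D}

/-- Grounded extensions of defenses (minimal complete extensions of defenses). -/
def GR : Set (Set (Option A × A)) :=
  {D | F.DComplete D ∧ ∀ D', F.DComplete D' → D ⊆ D'}

/-- Preferred extensions of defenses (maximal complete extensions of defenses). -/
def PR : Set (Set (Option A × A)) :=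
  {D | F.DComplete D ∧ ∀ D', F.DComplete D' → D ⊆ D' → D = D'}

/-- Stable extensions of defenses. -/
def ST : Set (Set (Option A × A)) :=
  {D | F.DConflictFree D ∧ ∀ X ∈ F.dgn, X ∉ D → ∃ Z ∈ D, F.dAtt Z X}

/-- `def(D)`: the defendees and defenders occurring in `D`. -/
def defSet (D : Set (Option A × A)) : Set A :=
  {a | a ∈ F.AR ∧ ((∃ x, (x, a) ∈ D) ∨ (∃ b, ((some a : Option A), b) ∈ D))}

/-- `d(E) = {⟨x,y⟩ ∈ nmd(F) : x ∈ E ∪ {⌀} and y ∈ E}`. -/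
def dE (E : Set A) : Set (Option A × A) :=
  {p | p ∈ F.nmd ∧ (p.1 = none ∨ ∃ a ∈ E, p.1 = some a) ∧ p.2 ∈ E}

/-- The arguments occurring in some defeater of defenses of `F`. -/
def argUnd : Set A :=
  {a | a ∈ F.AR ∧ ((∃ b, ((some a : Option A), b) ∈ F.und) ∨ ∃ x, (x, a) ∈ F.und)}

/-- The c-kernel of `F`. -/
def ck : AF A where
  AR := F.AR
  att a b := F.att a b ∧ ¬(a ≠ b ∧ F.att a a ∧ F.att b b)
  finite := F.finite
  att_mem a b h := F.att_mem a b h.1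

/-- Union of two argument graphs. -/
def union (F G : AF A) : AF A where
  AR := F.AR ∪ G.AR
  att a b := F.att a b ∨ G.att a b
  finite := F.finite.union G.finite
  att_mem a b h := by
    rcases h with h | h
    · exact ⟨Or.inl (F.att_mem a b h).1, Or.inl (F.att_mem a b h).2⟩
    · exact ⟨Or.inr (G.att_mem a b h).1, Or.inr (G.att_mem a b h).2⟩

/-- A set of defenses `D` regarded as a binary relation on `AR ∪ {⌀}`. -/
def dRel (D : Set (Option A × A)) : Option A → Option A → Prop :=
  fun x y => ∃ b, y = some b ∧ (x, b) ∈ D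

/-- The root reason `RR(α, D)` of `α` w.r.t. an extension of defenses `D`,
where `D⁺` is the transitive closure of `D`. -/
def RR (α : A) (D : Set (Option A × A)) : Set (Option A) :=
  {x | (F.Initial α ∧ x = none) ∨
       (¬ F.Initial α ∧ ∃ β, x = some β ∧ β ∈ F.AR ∧
         ((Relation.TransGen (dRel D) (some β) (some β) ∧ β = α) ∨
          (Relation.TransGen (dRel D) (some β) (some α) ∧
            (Relation.TransGen (dRel D) (some β) (some β) ∨ F.Initial β))))}

/-- The set of root reasons for accepting `α` under complete defense semantics. -/
def rrCO (α : A) : Set (Set (Option A)) :=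
  {S | ∃ D ∈ F.CO, S = F.RR α D}

end AF
section Helpers
namespace AF

variable {A : Type*} (F : AF A) {E : Set A}

lemma dE_fst {p : Option A × A} (hp : p ∈ F.dE E) {u : A} (hu : p.1 = some u) : u ∈ E := by
  obtain ⟨-, h1, -⟩ := hp
  rcases h1 with h0 | ⟨c, hcE, hc⟩
  · rw [h0] at hu; cases hu
  · rw [hc] at hu; injection hu with hu; rwa [← hu]

lemma dE_snd {p : Option A × A} (hp : p ∈ F.dE E) : p.2 ∈ E := hp.2.2

lemma exists_defense_end (hC : F.Complete E) {c : A} (hc : c ∈ E) :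
    ∃ Z ∈ F.dE E, Z.2 = c := by
  obtain ⟨⟨⟨hsub, hcf⟩, hadm⟩, -⟩ := hC
  by_cases hin : F.Initial c
  · exact ⟨(none, c), ⟨Or.inr ⟨rfl, hsub hc, hin⟩, Or.inl rfl, hc⟩, rfl⟩
  · simp only [AF.Initial, not_forall, not_not] at hin
    obtain ⟨g, hg⟩ := hin
    obtain ⟨d, hd, hdg⟩ := hadm c hc g hg
    refine ⟨(some d, c), ⟨Or.inl ⟨d, rfl, hsub hd, hsub hc, ⟨?_, ?_⟩,
      g, (F.att_mem g c hg).1, hdg, hg⟩, Or.inr ⟨d, hd, rfl⟩, hc⟩, rfl⟩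
    · intro x hx
      simp only [Set.mem_insert_iff, Set.mem_singleton_iff] at hx
      rcases hx with rfl | rfl
      · exact hsub hd
      · exact hsub hc
    · intro x hx y hy
      simp only [Set.mem_insert_iff, Set.mem_singleton_iff] at hx hy
      have hx' : x ∈ E := by rcases hx with rfl | rfl; exacts [hd, hc]
      have hy' : y ∈ E := by rcases hy with rfl | rfl; exacts [hd, hc]
      exact hcf x hx' y hy'

lemma dAtt_of (hC : F.Complete E) {Y : Option A × A} {t : A}
    (hY : Y.1 = some t ∨ Y.2 = t) {c : A} (hc : c ∈ E) (hct : F.att c t) :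
    ∃ Z ∈ F.dE E, F.dAtt Z Y := by
  obtain ⟨Z, hZ, hZ2⟩ := exists_defense_end F hC hc
  refine ⟨Z, hZ, ?_⟩
  rcases hY with h1 | h2
  · exact Or.inr (Or.inr (Or.inl ⟨Z.2, t, rfl, h1, by rw [hZ2]; exact hct⟩))
  · exact Or.inr (Or.inr (Or.inr (by rw [hZ2, h2]; exact hct)))

lemma key (hC : F.Complete E) {α β : A}
    (hdd : F.DDefends (F.dE E) (some α, β)) {a : A}
    (ha : F.att a α ∨ F.att a β) : ∃ c ∈ E, F.att c a := by
  by_contra hcon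
  push_neg at hcon
  have haAR : a ∈ F.AR := by
    rcases ha with h' | h'
    · exact (F.att_mem _ _ h').1
    · exact (F.att_mem _ _ h').1
  have hatk : ∀ x : Option A, F.dAtt (x, a) (some α, β) := by
    intro x
    rcases ha with h' | h'
    · exact Or.inr (Or.inr (Or.inl ⟨a, α, rfl, rfl, h'⟩))
    · exact Or.inr (Or.inr (Or.inr h'))
  have extract : ∀ y : Option A, ∀ Z ∈ F.dE E, F.dAtt Z (y, a) →
      ∃ c ∈ E, F.oatt (some c) y := by
    intro y Z hZ hZY
    rcases hZY with ⟨u, v, hu, hv, huv⟩ | ⟨u, v, hu, hv, huv⟩ | ⟨u, v, hu, hv, huv⟩ | h4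
    · exact ⟨u, F.dE_fst hZ hu, u, v, rfl, hv, huv⟩
    · injection hv with hv
      have hv' : a = v := hv
      subst hv'
      exact absurd huv (hcon u (F.dE_fst hZ hu))
    · injection hu with hu
      exact ⟨Z.2, F.dE_snd hZ, u, v, by rw [hu], hv, huv⟩
    · exact absurd h4 (hcon Z.2 (F.dE_snd hZ))
  have caseA : ((none, a) : Option A × A) ∈ F.dgn → False := by
    intro hdgn
    obtain ⟨Z, hZ, hZY⟩ := hdd (none, a) hdgn (hatk none)
    obtain ⟨c, hcE, u, v, hu, hv, huv⟩ := extract none Z hZ hZY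
    exact nomatch hv
  by_cases hinit : F.Initial a
  · exact caseA (Or.inl (Or.inr ⟨rfl, haAR, hinit⟩))
  by_cases haa : F.att a a
  · exact caseA (Or.inr (Or.inr ⟨rfl, haAR, Or.inl haa⟩))
  by_cases hsg : ∃ g, F.att g g ∧ F.att g a
  · exact caseA (Or.inr (Or.inr ⟨rfl, haAR, Or.inr hsg⟩))
  simp only [AF.Initial, not_forall, not_not] at hinit
  obtain ⟨b, hab⟩ := hinit
  have hbAR := (F.att_mem b a hab).1
  have hbb : ¬ F.att b b := fun hb => hsg ⟨b, hb, hab⟩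
  have hdefb : F.Defends E b := by
    intro y hyb
    have hyAR := (F.att_mem y b hyb).1
    have hYdgn : ((some y, a) : Option A × A) ∈ F.dgn := by
      by_cases hcfya : F.ConflictFree {y, a}
      · exact Or.inl (Or.inl ⟨y, rfl, hyAR, haAR, hcfya, b, hbAR, hyb, hab⟩)
      · refine Or.inr (Or.inl ⟨y, rfl, hyAR, haAR, hcfya, b, hbAR, ?_, ?_, hyb, hab⟩)
        · rintro rfl; exact hbb hyb
        · rintro rfl; exact haa hab
    obtain ⟨Z, hZ, hZY⟩ := hdd (some y, a) hYdgn (hatk (some y))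
    obtain ⟨c, hcE, u, v, hu, hv, huv⟩ := extract (some y) Z hZ hZY
    injection hu with hu
    injection hv with hv
    exact ⟨c, hcE, by rw [hu, hv]; exact huv⟩
  exact hcon b (hC.2 b hbAR hdefb) hab

end AF
end Helpers

/-- Theorem 2: for every complete extension `E` of `F`,
`d(E)` is a complete extension of defenses of the defense graph of `F`. -/
theorem statement3 {A : Type*} (F : AF A) (E : Set A)
    (hE : E ∈ F.co) : F.dE E ∈ F.CO := by
  have hC : F.Complete E := hE
  obtain ⟨⟨⟨hsub, hcf⟩, hadm⟩, hcomp⟩ := hC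
  have hC' : F.Complete E := hE
  refine ⟨⟨⟨fun p hp => hp.1, ?_⟩, ?_⟩, ?_⟩
  · -- conflict-free
    intro X hX Y hY hXY
    rcases hXY with ⟨u, v, hu, hv, huv⟩ | ⟨u, v, hu, hv, huv⟩ | ⟨u, v, hu, hv, huv⟩ | h4
    · exact hcf u (F.dE_fst hX hu) v (F.dE_fst hY hv) huv
    · injection hv with hv
      exact hcf u (F.dE_fst hX hu) v (hv ▸ F.dE_snd hY) huv
    · injection hu with hu
      exact hcf u (hu ▸ F.dE_snd hX) v (F.dE_fst hY hv) huv
    · exact hcf X.2 (F.dE_snd hX) Y.2 (F.dE_snd hY) h4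
  · -- admissible
    intro X hX Y hYdgn hYX
    rcases hYX with ⟨u, v, hu, hv, huv⟩ | ⟨u, v, hu, hv, huv⟩ | ⟨u, v, hu, hv, huv⟩ | h4
    · obtain ⟨c, hc, hcu⟩ := hadm v (F.dE_fst hX hv) u huv
      exact F.dAtt_of hC' (Or.inl hu) hc hcu
    · injection hv with hv
      obtain ⟨c, hc, hcu⟩ := hadm v (hv ▸ F.dE_snd hX) u huv
      exact F.dAtt_of hC' (Or.inl hu) hc hcu
    · injection hu with hu
      obtain ⟨c, hc, hcu⟩ := hadm v (F.dE_fst hX hv) u huv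
      exact F.dAtt_of hC' (Or.inr hu) hc hcu
    · obtain ⟨c, hc, hcu⟩ := hadm X.2 (F.dE_snd hX) Y.2 h4
      exact F.dAtt_of hC' (Or.inr rfl) hc hcu
  · -- complete
    intro X hXnmd hdd
    obtain ⟨x, β⟩ := X
    rcases hXnmd with ⟨α, hx1, hαAR, hβAR, hcfab, hγ⟩ | ⟨hx1, hβAR, hinit⟩
    · simp only at hx1
      subst hx1
      have hdd' : F.DDefends (F.dE E) (some α, β) := hdd
      have hαE : α ∈ E :=
        hcomp α hαAR (fun a haα => F.key hC' hdd' (Or.inl haα))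
      have hβE : β ∈ E :=
        hcomp β hβAR (fun a haβ => F.key hC' hdd' (Or.inr haβ))
      exact ⟨Or.inl ⟨α, rfl, hαAR, hβAR, hcfab, hγ⟩, Or.inr ⟨α, hαE, rfl⟩, hβE⟩
    · simp only at hx1
      subst hx1
      have hβE : β ∈ E := hcomp β hβAR (fun b hb => absurd hb (hinit b))
      exact ⟨Or.inr ⟨rfl, hβAR, hinit⟩, Or.inl rfl, hβE⟩
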